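/- Let 0 < q < 1/3, λ > 1, and Θ = q^{−1/λ}. Let (Q_m)_{m≥1} be a sequence of positive integers such that Q_m ∈ 10ℕ⁺ and Q_{m+1}/Q_m ∈ 10ℕ⁺ for all m, and such that ℓ₁·exp(Θ^m) ≤ Q_m ≤ ℓ₂·exp(Θ^m) for some constants 0 < ℓ₁ ≤ ℓ₂ and all m ≥ 1. Define 𝒫(x) = Σ_{m=1}^∞ q^m sin(π Q_m x) for x ∈ ℝ. Then 𝒫 is well defined (the series converges uniformly), continuous, 1-periodic, and there exist C > 0 and h₀ ∈ (0,1) such that for all x ∈ ℝ and all h with 0 < |h| ≤ h₀: |𝒫(x+h) − 𝒫(x)| ≤ C / (ln(1/|h|))^λ. -/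

import Mathlib

open Filter Finset Real

lemma sin_diff_le' (a b : ℝ) : |Real.sin a - Real.sin b| ≤ |a - b| := by
  rw [Real.sin_sub_sin, abs_mul, abs_mul]
  have h1 : |Real.sin ((a - b) / 2)| ≤ |(a - b) / 2| := Real.abs_sin_le_abs
  have h2 : |Real.cos ((a + b) / 2)| ≤ 1 := Real.abs_cos_le_one _
  calc |(2:ℝ)| * |Real.sin ((a - b) / 2)| * |Real.cos ((a + b) / 2)|
      ≤ |(2:ℝ)| * |(a - b) / 2| * 1 := by
        apply mul_le_mul (mul_le_mul le_rfl h1 (abs_nonneg _) (abs_nonneg _)) h2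
          (abs_nonneg _) (by positivity)
    _ = |a - b| := by rw [abs_div, mul_one]; simp; ring

lemma sin_diff_le2 (a b : ℝ) : |Real.sin a - Real.sin b| ≤ 2 := by
  have := Real.abs_sin_le_one a
  have := Real.abs_sin_le_one b
  calc |Real.sin a - Real.sin b| ≤ |Real.sin a| + |Real.sin b| := abs_sub _ _
    _ ≤ 2 := by linarith



/-- The lacunary trigonometric series `𝒫(x) = ∑_{m ≥ 1} q^m sin(π Q_m x)`. -/
noncomputable def lacP (q : ℝ) (Q : ℕ → ℕ) : ℝ → ℝ :=
  fun x => ∑' m : ℕ, q ^ (m + 1) * Real.sin (Real.pi * (Q (m + 1) : ℝ) * x)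

set_option maxHeartbeats 1000000 in
/-- `𝒫` is well defined (uniform convergence), continuous, 1-periodic,
and logarithmically Hölder continuous with exponent `λ`. -/
theorem statement10 (q lam : ℝ) (hq0 : 0 < q) (hq3 : q < 1 / 3) (hlam : 1 < lam)
    (Q : ℕ → ℕ) (l₁ l₂ : ℝ) (hl₁ : 0 < l₁) (hl₁₂ : l₁ ≤ l₂)
    (hQ10 : ∀ m : ℕ, 1 ≤ m → ∃ a : ℕ, 0 < a ∧ Q m = 10 * a)
    (hQrat : ∀ m : ℕ, 1 ≤ m → ∃ a : ℕ, 0 < a ∧ Q (m + 1) = (10 * a) * Q m)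
    (hQgrow : ∀ m : ℕ, 1 ≤ m →
      l₁ * Real.exp ((q ^ (-(1 / lam))) ^ m) ≤ (Q m : ℝ) ∧
      (Q m : ℝ) ≤ l₂ * Real.exp ((q ^ (-(1 / lam))) ^ m)) :
    TendstoUniformly
      (fun (N : ℕ) (x : ℝ) =>
        ∑ m ∈ Finset.range N, q ^ (m + 1) * Real.sin (Real.pi * (Q (m + 1) : ℝ) * x))
      (lacP q Q) Filter.atTop ∧
    Continuous (lacP q Q) ∧
    Function.Periodic (lacP q Q) 1 ∧
    ∃ C h₀ : ℝ, 0 < C ∧ 0 < h₀ ∧ h₀ < 1 ∧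
      ∀ x h : ℝ, 0 < |h| → |h| ≤ h₀ →
        |lacP q Q (x + h) - lacP q Q x| ≤ C / (Real.log (1 / |h|)) ^ lam := by
  have hq1 : q < 1 := by linarith
  have hl₂ : 0 < l₂ := lt_of_lt_of_le hl₁ hl₁₂
  have hlam0 : (0:ℝ) < lam := by linarith
  set Θ : ℝ := q ^ (-(1 / lam)) with hΘdef
  have hΘpos : 0 < Θ := Real.rpow_pos_of_pos hq0 _
  have hΘ1 : 1 < Θ := by
    rw [hΘdef, Real.one_lt_rpow_iff_of_pos hq0]
    right
    refine ⟨hq1, by rw [neg_lt, neg_zero]; positivity⟩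
  -- summability of the majorant
  have hgeo : Summable (fun m : ℕ => q ^ m) := summable_geometric_of_lt_one hq0.le hq1
  have hu : Summable (fun m : ℕ => q ^ (m + 1)) := (summable_nat_add_iff 1).2 hgeo
  have hbound : ∀ (m : ℕ) (x : ℝ),
      ‖q ^ (m + 1) * Real.sin (Real.pi * (Q (m + 1) : ℝ) * x)‖ ≤ q ^ (m + 1) := by
    intro m x
    rw [Real.norm_eq_abs, abs_mul, abs_pow, abs_of_pos hq0]
    calc q ^ (m + 1) * |Real.sin (Real.pi * (Q (m + 1) : ℝ) * x)| ≤ q ^ (m + 1) * 1 :=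
          mul_le_mul_of_nonneg_left (Real.abs_sin_le_one _) (by positivity)
      _ = q ^ (m + 1) := mul_one _
  refine ⟨tendstoUniformly_tsum_nat hu hbound, continuous_tsum (fun m => by fun_prop) hu hbound,
    ?_, ?_⟩
  · -- periodicity
    intro x
    unfold lacP
    refine tsum_congr fun m => ?_
    obtain ⟨a, ha, hQa⟩ := hQ10 (m + 1) (by omega)
    have : Real.pi * (Q (m + 1) : ℝ) * (x + 1)
        = Real.pi * (Q (m + 1) : ℝ) * x + (5 * a : ℕ) * (2 * Real.pi) := by
      rw [hQa]; push_cast; ring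
    rw [this, Real.sin_add_nat_mul_two_pi]
  · -- Hölder continuity
    set n : ℕ := ⌈lam⌉₊ with hn
    have hlamn : lam ≤ (n : ℝ) := Nat.le_ceil lam
    refine ⟨Real.pi * l₂ * (n.factorial : ℝ) * 2 ^ n + (2 * Θ) ^ lam,
      min (Real.exp (-(2 * Θ))) (1 / 2), ?_, ?_, ?_, ?_⟩
    · have : (0:ℝ) < (2 * Θ) ^ lam := Real.rpow_pos_of_pos (by linarith) _
      have : (0:ℝ) < Real.pi := Real.pi_pos
      positivity
    · exact lt_min (Real.exp_pos _) (by norm_num)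
    · exact lt_of_le_of_lt (min_le_right _ _) (by norm_num)
    intro x h hh0 hh₀
    set L : ℝ := Real.log (1 / |h|) with hLdef
    have hhe : Real.exp (-L) = |h| := by
      rw [hLdef, one_div, Real.log_inv, neg_neg, Real.exp_log hh0]
    have hL2T : 2 * Θ ≤ L := by
      have h1 : |h| ≤ Real.exp (-(2 * Θ)) := le_trans hh₀ (min_le_left _ _)
      have h2 : Real.exp (-L) ≤ Real.exp (-(2 * Θ)) := by rw [hhe]; exact h1
      have := Real.exp_le_exp.1 h2
      linarith
    have hL1 : 1 ≤ L := by linarith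
    have hL0 : 0 < L := by linarith
    have hLpow : (0:ℝ) < L ^ lam := Real.rpow_pos_of_pos hL0 _
    -- choose M
    have hex : ∃ k : ℕ, L / 2 < Θ ^ (k + 1) := by
      obtain ⟨k, hk⟩ := pow_unbounded_of_one_lt (L / 2) hΘ1
      exact ⟨k, lt_of_lt_of_le hk (pow_le_pow_right₀ hΘ1.le (Nat.le_succ k))⟩
    obtain ⟨M, hM1, hM2⟩ : ∃ M : ℕ, Θ ^ M ≤ L / 2 ∧ L / 2 < Θ ^ (M + 1) := by
      classical
      refine ⟨Nat.find hex, ?_, Nat.find_spec hex⟩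
      have hM0 : Nat.find hex ≠ 0 := by
        intro h0
        have := Nat.find_spec hex
        rw [h0, pow_one] at this
        linarith
      have hlt : Nat.find hex - 1 < Nat.find hex := by omega
      have := Nat.find_min hex hlt
      rw [show Nat.find hex - 1 + 1 = Nat.find hex by omega] at this
      linarith [not_lt.1 this]
    -- summability of the two series
    have hs1 : Summable (fun m : ℕ =>
        q ^ (m + 1) * Real.sin (Real.pi * (Q (m + 1) : ℝ) * (x + h))) :=
      Summable.of_norm_bounded hu (fun m => hbound m (x + h))
    have hs2 : Summable (fun m : ℕ =>
        q ^ (m + 1) * Real.sin (Real.pi * (Q (m + 1) : ℝ) * x)) :=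
      Summable.of_norm_bounded hu (fun m => hbound m x)
    set f : ℕ → ℝ := fun m => q ^ (m + 1) *
      (Real.sin (Real.pi * (Q (m + 1) : ℝ) * (x + h)) -
        Real.sin (Real.pi * (Q (m + 1) : ℝ) * x)) with hf
    have hfs : Summable f := by
      have := hs1.sub hs2
      refine this.congr fun m => ?_
      simp [hf, mul_sub]
    have hsplit : lacP q Q (x + h) - lacP q Q x = ∑' m, f m := by
      unfold lacP
      rw [← Summable.tsum_sub hs1 hs2]
      exact tsum_congr fun m => by simp [hf, mul_sub]
    -- pointwise bounds on f
    have hfabs2 : ∀ m : ℕ, |f m| ≤ 2 * q ^ (m + 1) := by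
      intro m
      simp only [hf]
      rw [abs_mul, abs_pow, abs_of_pos hq0]
      have h2 := sin_diff_le2 (Real.pi * (Q (m + 1) : ℝ) * (x + h))
        (Real.pi * (Q (m + 1) : ℝ) * x)
      have := mul_le_mul_of_nonneg_left h2 (pow_pos hq0 (m + 1)).le
      linarith
    have hfabsL : ∀ m : ℕ, m + 1 ≤ M →
        |f m| ≤ q ^ (m + 1) * (Real.pi * l₂ * Real.exp (L / 2) * |h|) := by
      intro m hmM
      rw [hf, abs_mul, abs_pow, abs_of_pos hq0]
      refine mul_le_mul_of_nonneg_left ?_ (by positivity)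
      calc |Real.sin (Real.pi * (Q (m + 1) : ℝ) * (x + h)) -
            Real.sin (Real.pi * (Q (m + 1) : ℝ) * x)|
          ≤ |Real.pi * (Q (m + 1) : ℝ) * (x + h) - Real.pi * (Q (m + 1) : ℝ) * x| :=
            sin_diff_le' _ _
        _ = Real.pi * (Q (m + 1) : ℝ) * |h| := by
            rw [show Real.pi * (Q (m + 1) : ℝ) * (x + h) - Real.pi * (Q (m + 1) : ℝ) * x
              = Real.pi * (Q (m + 1) : ℝ) * h by ring, abs_mul,
              abs_of_nonneg (by positivity : (0:ℝ) ≤ Real.pi * (Q (m + 1) : ℝ))]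
        _ ≤ Real.pi * l₂ * Real.exp (L / 2) * |h| := by
            have hQle : (Q (m + 1) : ℝ) ≤ l₂ * Real.exp (Θ ^ (m + 1)) :=
              (hQgrow (m + 1) (by omega)).2
            have hexple : Real.exp (Θ ^ (m + 1)) ≤ Real.exp (L / 2) := by
              apply Real.exp_le_exp.2
              exact le_trans (pow_le_pow_right₀ hΘ1.le hmM) hM1
            have hQ2 : (Q (m + 1) : ℝ) ≤ l₂ * Real.exp (L / 2) :=
              le_trans hQle (mul_le_mul_of_nonneg_left hexple hl₂.le)
            have hπQ : Real.pi * (Q (m + 1) : ℝ) ≤ Real.pi * (l₂ * Real.exp (L / 2)) :=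
              mul_le_mul_of_nonneg_left hQ2 Real.pi_pos.le
            calc Real.pi * (Q (m + 1) : ℝ) * |h|
                ≤ Real.pi * (l₂ * Real.exp (L / 2)) * |h| :=
                  mul_le_mul_of_nonneg_right hπQ (abs_nonneg h)
              _ = Real.pi * l₂ * Real.exp (L / 2) * |h| := by ring
    -- geometric sums
    have hsum_le_one : ∑ m ∈ Finset.range M, q ^ (m + 1) ≤ 1 := by
      have h1 : ∑ m ∈ Finset.range M, q ^ (m + 1) ≤ ∑' m : ℕ, q ^ (m + 1) :=
        Summable.sum_le_tsum _ (fun m _ => by positivity) hu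
      have h2 : ∑' m : ℕ, q ^ (m + 1) = q * (1 - q)⁻¹ := by
        rw [show (fun m : ℕ => q ^ (m + 1)) = fun m : ℕ => q * q ^ m from
          funext fun m => by rw [pow_succ]; ring]
        rw [tsum_mul_left, tsum_geometric_of_lt_one hq0.le hq1]
      rw [h2] at h1
      refine le_trans h1 ?_
      rw [mul_inv_le_iff₀ (by linarith)]
      linarith
    -- head bound
    have hhead : |∑ m ∈ Finset.range M, f m| ≤ Real.pi * l₂ * Real.exp (-(L / 2)) := by
      calc |∑ m ∈ Finset.range M, f m| ≤ ∑ m ∈ Finset.range M, |f m| :=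
            Finset.abs_sum_le_sum_abs _ _
        _ ≤ ∑ m ∈ Finset.range M, q ^ (m + 1) * (Real.pi * l₂ * Real.exp (L / 2) * |h|) := by
            refine Finset.sum_le_sum fun m hm => ?_
            exact hfabsL m (by simpa using Finset.mem_range.1 hm)
        _ = (∑ m ∈ Finset.range M, q ^ (m + 1)) * (Real.pi * l₂ * Real.exp (L / 2) * |h|) := by
            rw [Finset.sum_mul]
        _ ≤ 1 * (Real.pi * l₂ * Real.exp (L / 2) * |h|) := by
            refine mul_le_mul_of_nonneg_right hsum_le_one ?_
            positivity
        _ = Real.pi * l₂ * Real.exp (-(L / 2)) := by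
            have he2 : Real.exp (L / 2) * Real.exp (-L) = Real.exp (-(L / 2)) := by
              rw [← Real.exp_add]; ring_nf
            rw [one_mul, ← hhe, mul_assoc, he2]
    -- tail bound
    have htail : |∑' m : ℕ, f (m + M)| ≤ q ^ M := by
      have hfsM : Summable (fun m : ℕ => f (m + M)) := (summable_nat_add_iff M).2 hfs
      have hfsMn : Summable (fun m : ℕ => ‖f (m + M)‖) := hfsM.norm
      have hg : Summable (fun m : ℕ => (2 * q ^ (M + 1)) * q ^ m) := hgeo.mul_left _
      calc |∑' m : ℕ, f (m + M)| = ‖∑' m : ℕ, f (m + M)‖ := (Real.norm_eq_abs _).symm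
        _ ≤ ∑' m : ℕ, ‖f (m + M)‖ := norm_tsum_le_tsum_norm hfsMn
        _ ≤ ∑' m : ℕ, (2 * q ^ (M + 1)) * q ^ m := by
            refine Summable.tsum_le_tsum (fun m => ?_) hfsMn hg
            calc ‖f (m + M)‖ = |f (m + M)| := Real.norm_eq_abs _
              _ ≤ 2 * q ^ (m + M + 1) := hfabs2 _
              _ = (2 * q ^ (M + 1)) * q ^ m := by ring
        _ = (2 * q ^ (M + 1)) * (1 - q)⁻¹ := by
            rw [tsum_mul_left, tsum_geometric_of_lt_one hq0.le hq1]
        _ ≤ q ^ M := by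
            rw [pow_succ]
            rw [mul_inv_le_iff₀ (by linarith)]
            nlinarith [pow_pos hq0 M]
    -- key rpow identities
    have hΘM : (Θ : ℝ) ^ M = q ^ ((-(1 / lam)) * M) := by
      rw [← Real.rpow_natCast Θ M, hΘdef, ← Real.rpow_mul hq0.le]
    have hqM : q ^ M = ((Θ : ℝ) ^ M) ^ (-lam) := by
      rw [hΘM, ← Real.rpow_mul hq0.le, ← Real.rpow_natCast q M]
      congr 1
      field_simp
    -- tail final: q ^ M ≤ (2Θ)^lam / L^lam
    have hqMle : q ^ M ≤ (2 * Θ) ^ lam / L ^ lam := by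
      have hpos : (0:ℝ) < L / (2 * Θ) := by positivity
      have hlt : L / (2 * Θ) ≤ Θ ^ M := by
        have : Θ ^ (M + 1) = Θ ^ M * Θ := pow_succ Θ M
        rw [this] at hM2
        rw [div_le_iff₀ (by linarith)]
        nlinarith
      have h1 : ((Θ:ℝ) ^ M) ^ (-lam) ≤ (L / (2 * Θ)) ^ (-lam) :=
        Real.rpow_le_rpow_of_nonpos hpos hlt (by linarith)
      rw [hqM]
      refine le_trans h1 ?_
      rw [Real.rpow_neg hpos.le, Real.div_rpow hL0.le (by linarith), inv_div]
    -- head final: exp(-(L/2)) ≤ n! * 2^n / L^lam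
    have hexpL : Real.exp (-(L / 2)) ≤ (n.factorial : ℝ) * 2 ^ n / L ^ lam := by
      have h1 : L ^ lam ≤ L ^ (n : ℝ) := Real.rpow_le_rpow_of_exponent_le hL1 hlamn
      have h2 : L ^ (n : ℝ) = L ^ n := Real.rpow_natCast L n
      have h3 : (L / 2) ^ n / (n.factorial : ℝ) ≤ Real.exp (L / 2) :=
        Real.pow_div_factorial_le_exp _ (by positivity) n
      have h4 : L ^ n ≤ (n.factorial : ℝ) * 2 ^ n * Real.exp (L / 2) := by
        have hfac : (0:ℝ) < (n.factorial : ℝ) := by positivity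
        have := (div_le_iff₀ hfac).1 h3
        calc L ^ n = (L / 2) ^ n * 2 ^ n := by
              rw [div_pow, div_mul_cancel₀]
              positivity
          _ ≤ Real.exp (L / 2) * (n.factorial : ℝ) * 2 ^ n := by
              refine mul_le_mul_of_nonneg_right ?_ (by positivity)
              linarith
          _ = (n.factorial : ℝ) * 2 ^ n * Real.exp (L / 2) := by ring
      rw [le_div_iff₀ hLpow, Real.exp_neg]
      calc (Real.exp (L / 2))⁻¹ * L ^ lam ≤ (Real.exp (L / 2))⁻¹ * L ^ n := by
            refine mul_le_mul_of_nonneg_left ?_ (by positivity)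
            rw [← h2]; exact h1
        _ ≤ (Real.exp (L / 2))⁻¹ * ((n.factorial : ℝ) * 2 ^ n * Real.exp (L / 2)) :=
            mul_le_mul_of_nonneg_left h4 (by positivity)
        _ = (n.factorial : ℝ) * 2 ^ n := by
            field_simp
    -- combine
    have hsplit2 : ∑' m, f m = (∑ m ∈ Finset.range M, f m) + ∑' m : ℕ, f (m + M) :=
      (Summable.sum_add_tsum_nat_add M hfs).symm
    rw [hsplit, hsplit2]
    calc |(∑ m ∈ Finset.range M, f m) + ∑' m : ℕ, f (m + M)|
        ≤ |∑ m ∈ Finset.range M, f m| + |∑' m : ℕ, f (m + M)| := abs_add_le _ _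
      _ ≤ Real.pi * l₂ * Real.exp (-(L / 2)) + q ^ M := add_le_add hhead htail
      _ ≤ Real.pi * l₂ * ((n.factorial : ℝ) * 2 ^ n / L ^ lam) + (2 * Θ) ^ lam / L ^ lam := by
          refine add_le_add (mul_le_mul_of_nonneg_left hexpL (by positivity)) hqMle
      _ = (Real.pi * l₂ * (n.factorial : ℝ) * 2 ^ n + (2 * Θ) ^ lam) / L ^ lam := by
          field_simp
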